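/- The ring homomorphism ℤ[q] → ℤ[[t]] sending q to 1 + t maps (q;q)_n into the ideal (t^n) for every n, and hence induces a ring homomorphism ι₁ : Ẑ[q]^ → ℤ[[t]] ≅ lim_n ℤ[t]/(t^n), characterized by the property that for every n the composite of ι₁ with reduction modulo t^n equals the composite of π_n with the induced map ℤ[q]/((q;q)_n) → ℤ[t]/(t^n). This homomorphism ι₁ is injective. -/

import Mathlib

open Polynomial

/-- `(q;q)_n = ∏_{i=1}^n (q^i - 1)` in `ℤ[q]`. -/
noncomputable def qPoch (n : ℕ) : Polynomial ℤ :=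
  ∏ i ∈ Finset.range n, (X ^ (i + 1) - 1)

lemma qPoch_dvd_succ (n : ℕ) : qPoch n ∣ qPoch (n + 1) :=
  ⟨X ^ (n + 1) - 1, by rw [qPoch, qPoch, Finset.prod_range_succ]⟩

/-- The canonical projection `ℤ[q]/((q;q)_{n+1}) → ℤ[q]/((q;q)_n)`. -/
noncomputable def habiroTrans (n : ℕ) :
    (Polynomial ℤ ⧸ Ideal.span {qPoch (n + 1)}) →+* Polynomial ℤ ⧸ Ideal.span {qPoch n} :=
  Ideal.Quotient.factor
    (Ideal.span_singleton_le_span_singleton.mpr (qPoch_dvd_succ n))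

/-- The Habiro ring `lim_n ℤ[q]/((q;q)_n)`, realized as the subring of compatible
sequences in `∏_n ℤ[q]/((q;q)_n)`. -/
noncomputable def HabiroRing : Subring (∀ n : ℕ, Polynomial ℤ ⧸ Ideal.span {qPoch n}) where
  carrier := {x | ∀ n, habiroTrans n (x (n + 1)) = x n}
  mul_mem' {a b} ha hb n := by
    simp only [Pi.mul_apply, map_mul, ha n, hb n]
  one_mem' n := by simp only [Pi.one_apply, map_one]
  add_mem' {a b} ha hb n := by
    simp only [Pi.add_apply, map_add, ha n, hb n]
  zero_mem' n := by simp only [Pi.zero_apply, map_zero]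
  neg_mem' {a} ha n := by simp only [Pi.neg_apply, map_neg, ha n]

/-- The canonical map `η : ℤ[q] → Ẑ[q]^`. -/
noncomputable def habiroEta : Polynomial ℤ →+* HabiroRing :=
  RingHom.codRestrict (Pi.ringHom fun n => Ideal.Quotient.mk (Ideal.span {qPoch n}))
    HabiroRing (fun _ _ => Ideal.Quotient.factor_mk _ _)

/-- The projection `π_n : Ẑ[q]^ → ℤ[q]/((q;q)_n)`. -/
noncomputable def habiroPi (n : ℕ) : HabiroRing →+* Polynomial ℤ ⧸ Ideal.span {qPoch n} :=
  (Pi.evalRingHom _ n).comp HabiroRing.subtype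

/-- The evaluation `ℤ[q] → ℤ[[t]]`, `q ↦ 1 + t`. -/
noncomputable def evalOnePlusT : Polynomial ℤ →+* PowerSeries ℤ :=
  Polynomial.eval₂RingHom (Int.castRingHom (PowerSeries ℤ)) (1 + PowerSeries.X)

lemma qPoch_dvd {k m : ℕ} (h : k ≤ m) : qPoch k ∣ qPoch m := by
  induction m with
  | zero => simpa [Nat.le_zero.mp h] using dvd_refl (qPoch 0)
  | succ m ih =>
    rcases Nat.lt_or_ge k (m+1) with h' | h'
    · exact (ih (Nat.lt_succ_iff.mp h')).trans (qPoch_dvd_succ m)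
    · have : k = m + 1 := le_antisymm h h'
      subst this; exact dvd_refl _

lemma X_sub_one_pow_dvd_qPoch (n : ℕ) : (X - 1 : Polynomial ℤ) ^ n ∣ qPoch n := by
  rw [qPoch]
  have := Finset.prod_dvd_prod_of_dvd (s := Finset.range n)
    (fun _ => (X - 1 : Polynomial ℤ)) (fun i => X ^ (i+1) - 1)
    (fun i _ => by simpa using sub_dvd_pow_sub_pow (X : Polynomial ℤ) 1 (i + 1))
  simpa [Finset.prod_const] using this

-- cyclotomic power divides qPoch
lemma cyc_dvd_aux (d e : ℕ) (hd : 0 < d) : (cyclotomic d ℤ) ^ e ∣ qPoch (d * e) := by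
  induction e with
  | zero => simp
  | succ e ih =>
    have hde : d * (e + 1) = d * e + d := by ring
    have hk : d * (e + 1) = (d * e + (d - 1)) + 1 := by omega
    have hstep : qPoch (d * (e+1))
        = qPoch (d * e + (d - 1)) * (X ^ ((d * e + (d - 1)) + 1) - 1) := by
      rw [hk, qPoch, Finset.prod_range_succ, ← qPoch]
    rw [hstep, pow_succ]
    refine mul_dvd_mul (ih.trans (qPoch_dvd (by omega))) ?_
    rw [← hk]
    have h1 : cyclotomic d ℤ ∣ X ^ d - 1 := cyclotomic.dvd_X_pow_sub_one d ℤ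
    have h2 : (X : Polynomial ℤ) ^ d - 1 ∣ X ^ (d * (e+1)) - 1 := by
      have := sub_dvd_pow_sub_pow ((X : Polynomial ℤ) ^ d) 1 (e + 1)
      simpa [← pow_mul] using this
    exact h1.trans h2

lemma cyc_pow_dvd_qPoch {d e m : ℕ} (hd : 0 < d) (h : d * e ≤ m) :
    (cyclotomic d ℤ) ^ e ∣ qPoch m :=
  (cyc_dvd_aux d e hd).trans (qPoch_dvd h)

lemma int_eq_zero_of_pow_dvd {a : ℤ} {p : ℕ} (hp : 2 ≤ p)
    (H : ∀ k, ((p : ℤ)) ^ k ∣ a) : a = 0 := by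
  by_contra ha
  set k := a.natAbs with hk
  have h2 : ((p : ℤ)) ^ k ≤ (a.natAbs : ℤ) :=
    Int.le_of_dvd (by exact_mod_cast Int.natAbs_pos.mpr ha) (Int.dvd_natAbs.mpr (H k))
  have h4 : (k : ℤ) < 2 ^ k := by exact_mod_cast Nat.lt_two_pow_self (n := k)
  have h5 : (2 : ℤ) ^ k ≤ (p : ℤ) ^ k :=
    pow_le_pow_left₀ (by norm_num) (by exact_mod_cast hp) k
  omega

lemma sep_lemma (Φ : Polynomial ℤ) (hm : Φ.Monic) (p : ℕ) (hp : 2 ≤ p) (h : Polynomial ℤ)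
    (H : ∀ k, ∃ u v : Polynomial ℤ, h = Φ * u + C ((p : ℤ) ^ k) * v) : Φ ∣ h := by
  rw [← modByMonic_eq_zero_iff_dvd hm]
  ext i
  rw [coeff_zero]
  apply int_eq_zero_of_pow_dvd hp
  intro k
  obtain ⟨u, v, huv⟩ := H k
  have : h %ₘ Φ = ((p:ℤ)^k) • (v %ₘ Φ) := by
    rw [huv, add_modByMonic]
    rw [(modByMonic_eq_zero_iff_dvd hm).mpr (Dvd.intro _ rfl), zero_add,
      ← smul_eq_C_mul, smul_modByMonic]
  rw [this, coeff_smul, smul_eq_mul]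
  exact Dvd.intro _ rfl

-- Frobenius congruence: p ∣ Φ^p - expand p Φ in ℤ[X]
lemma frob_cong (p : ℕ) (hp : p.Prime) (f : Polynomial ℤ) :
    ∃ c : Polynomial ℤ, f ^ p = expand ℤ p f + C (p : ℤ) * c := by
  haveI : Fact p.Prime := ⟨hp⟩
  have hmap : Polynomial.map (Int.castRingHom (ZMod p)) (f ^ p - expand ℤ p f) = 0 := by
    rw [Polynomial.map_sub, Polynomial.map_pow, Polynomial.map_expand]
    have := Polynomial.map_frobenius_expand p (Polynomial.map (Int.castRingHom (ZMod p)) f)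
    rw [ZMod.frobenius_zmod] at this
    rw [← this, Polynomial.map_id, sub_self]
  have hco : ∀ i, ((p : ℤ)) ∣ (f ^ p - expand ℤ p f).coeff i := by
    intro i
    have := congrArg (fun g => Polynomial.coeff g i) hmap
    simp only [Polynomial.coeff_map, Polynomial.coeff_zero] at this
    exact_mod_cast (ZMod.intCast_zmod_eq_zero_iff_dvd _ p).mp this
  obtain ⟨c, hc⟩ := (Polynomial.C_dvd_iff_dvd_coeff ((p:ℤ)) (f ^ p - expand ℤ p f)).mpr hco
  exact ⟨c, by rw [← hc]; ring⟩

lemma cyc_dvd_expand {p d : ℕ} (hp : p.Prime) (hd : 0 < d) :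
    cyclotomic (d * p) ℤ ∣ expand ℤ p (cyclotomic d ℤ) := by
  by_cases h : p ∣ d
  · rw [cyclotomic_expand_eq_cyclotomic hp h]
  · rw [cyclotomic_expand_eq_cyclotomic_mul hp h]
    exact Dvd.intro _ rfl

-- key identity
lemma key_identity {p d' : ℕ} (hp : p.Prime) (hd' : 0 < d') :
    ∃ A c : Polynomial ℤ,
      (cyclotomic d' ℤ) ^ p = cyclotomic (d' * p) ℤ * A + C (p : ℤ) * c := by
  obtain ⟨c, hc⟩ := frob_cong p hp (cyclotomic d' ℤ)
  obtain ⟨A, hA⟩ := cyc_dvd_expand hp hd'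
  exact ⟨A, c, by rw [hc, hA]⟩

lemma cyc_prime {d : ℕ} (hd : 0 < d) : Prime (cyclotomic d ℤ) :=
  (UniqueFactorizationMonoid.irreducible_iff_prime).mp (cyclotomic.irreducible hd)

lemma cyc_not_dvd {d d' : ℕ} (hd : 0 < d) (hd' : 0 < d') (hne : d' ≠ d) :
    ¬ cyclotomic d' ℤ ∣ cyclotomic d ℤ := by
  intro h
  have hassoc := (cyclotomic.irreducible hd').associated_of_dvd (cyclotomic.irreducible hd) h
  have := Polynomial.eq_of_monic_of_associated (cyclotomic.monic _ _) (cyclotomic.monic _ _) hassoc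
  exact hne (cyclotomic_injective (R := ℤ) this)

lemma cyc_not_dvd_pow {d d' : ℕ} (hd : 0 < d) (hd' : 0 < d') (hne : d' ≠ d) (e : ℕ) :
    ¬ cyclotomic d' ℤ ∣ (cyclotomic d ℤ) ^ e := by
  intro h
  exact cyc_not_dvd hd hd' hne ((cyc_prime hd').dvd_of_dvd_pow h)

lemma prod_cyc_pow_dvd (S : Finset ℕ) (m : ℕ) :
    ∀ (g : Polynomial ℤ), (∀ d ∈ S, 0 < d) → (∀ d ∈ S, (cyclotomic d ℤ) ^ m ∣ g) →
    (∏ d ∈ S, (cyclotomic d ℤ) ^ m) ∣ g := by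
  induction S using Finset.induction_on with
  | empty => intro g _ _; simp
  | insert _ _ ha ih =>
    rename_i a S
    intro g hpos H
    rw [Finset.prod_insert ha]
    obtain ⟨t, ht⟩ := H a (Finset.mem_insert_self a S)
    have hdvd : ∀ d ∈ S, (cyclotomic d ℤ) ^ m ∣ t := by
      intro d hd
      have h1 : (cyclotomic d ℤ) ^ m ∣ (cyclotomic a ℤ) ^ m * t := by
        rw [← ht]; exact H d (Finset.mem_insert_of_mem hd)
      exact (cyc_prime (hpos d (Finset.mem_insert_of_mem hd))).pow_dvd_of_dvd_mul_left m
        (cyc_not_dvd_pow (hpos a (Finset.mem_insert_self a S))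
          (hpos d (Finset.mem_insert_of_mem hd)) (fun hEq => ha (hEq ▸ hd)) m) h1
    obtain ⟨w, hw⟩ := ih t (fun d hd => hpos d (Finset.mem_insert_of_mem hd)) hdvd
    exact ⟨w, by rw [ht, hw]; ring⟩

theorem key_induction (f : ℕ → Polynomial ℤ)
    (H1 : ∀ n, (X - 1 : Polynomial ℤ) ^ n ∣ f n)
    (H2 : ∀ {n m : ℕ}, n ≤ m → qPoch n ∣ f m - f n) :
    ∀ d, 0 < d → ∀ e, ∃ N₀, ∀ N, N₀ ≤ N → (cyclotomic d ℤ) ^ e ∣ f N := by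
  intro d
  induction d using Nat.strong_induction_on with
  | _ d IH =>
    intro hd e
    rcases eq_or_ne d 1 with rfl | hd1
    · exact ⟨e, fun N hN => by
        rw [cyclotomic_one]; exact (pow_dvd_pow _ hN).trans (H1 N)⟩
    -- d ≥ 2
    have hp : (d.minFac).Prime := Nat.minFac_prime hd1
    set p := d.minFac with hpdef
    have hpd : p ∣ d := Nat.minFac_dvd d
    set d' := d / p with hd'def
    have hd'p : d' * p = d := Nat.div_mul_cancel hpd
    have hd'pos : 0 < d' := Nat.div_pos (Nat.minFac_le hd) hp.pos
    have hd'lt : d' < d := by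
      have := hp.two_le
      calc d' = d / p := rfl
        _ < d := Nat.div_lt_self hd (by omega)
    obtain ⟨A, c, hAc⟩ := key_identity hp hd'pos
    rw [hd'p] at hAc
    -- inner induction on e
    induction e with
    | zero => exact ⟨0, fun N _ => by simp⟩
    | succ e ihe =>
      obtain ⟨A₁, hA₁⟩ := ihe
      refine ⟨max A₁ (d * (e + 1)), fun M hM => ?_⟩
      obtain ⟨h, hh⟩ := hA₁ M (le_trans (le_max_left _ _) hM)
      have hsep : cyclotomic d ℤ ∣ h := by
        apply sep_lemma _ (cyclotomic.monic d ℤ) p hp.two_le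
        intro k
        obtain ⟨N₀', hN₀'⟩ := IH d' hd'lt hd'pos (p * k)
        set N := max M (max A₁ N₀') with hN
        obtain ⟨hN', hhN⟩ := hA₁ N (le_trans (le_max_left _ _) (le_max_right _ _))
        have hdd : (cyclotomic d' ℤ) ^ (p * k) ∣ f N :=
          hN₀' N (le_trans (le_max_right _ _) (le_max_right _ _))
        have hdvd_hN : (cyclotomic d' ℤ) ^ (p * k) ∣ hN' := by
          apply (cyc_prime hd'pos).pow_dvd_of_dvd_mul_left (p * k)
            (cyc_not_dvd_pow hd hd'pos (by omega) e)
          rw [← hhN]; exact hdd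
        obtain ⟨w, hw⟩ := hdvd_hN
        -- hN' = Φ_d * u₁ + p^k * (c^k * w)
        have hbin : cyclotomic d ℤ ∣ ((cyclotomic d' ℤ) ^ p) ^ k - (C (p:ℤ) * c) ^ k := by
          have := sub_dvd_pow_sub_pow ((cyclotomic d' ℤ) ^ p) (C (p:ℤ) * c) k
          have h2 : (cyclotomic d' ℤ) ^ p - C (p:ℤ) * c = cyclotomic d ℤ * A := by
            rw [hAc]; ring
          rw [h2] at this
          exact (Dvd.intro _ rfl).trans this
        obtain ⟨B, hB⟩ := hbin
        have hNform : hN' = cyclotomic d ℤ * (B * w) + C ((p:ℤ)^k) * (c ^ k * w) := by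
          have : ((cyclotomic d' ℤ) ^ p) ^ k = cyclotomic d ℤ * B + (C (p:ℤ) * c) ^ k := by
            rw [← hB]; ring
          rw [hw, pow_mul, this, mul_pow, ← C_pow]
          ring
        -- Φ_d ∣ hN' - h
        have hdiff : cyclotomic d ℤ ∣ hN' - h := by
          have hq : qPoch M ∣ f N - f M := H2 (le_trans (le_max_left _ _) (le_refl N))
          have hcyc : (cyclotomic d ℤ) ^ (e + 1) ∣ f N - f M :=
            (cyc_pow_dvd_qPoch hd (le_trans (le_max_right _ _) hM)).trans hq
          have heq : f N - f M = (cyclotomic d ℤ) ^ e * (hN' - h) := by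
            rw [hhN, hh]; ring
          rw [heq, pow_succ] at hcyc
          have hne : (cyclotomic d ℤ) ^ e ≠ 0 :=
            pow_ne_zero _ (cyclotomic_ne_zero d ℤ)
          exact (mul_dvd_mul_iff_left hne).mp hcyc
        obtain ⟨z, hz⟩ := hdiff
        refine ⟨B * w - z, c ^ k * w, ?_⟩
        linear_combination hNform - hz
      obtain ⟨t, ht⟩ := hsep
      exact ⟨t, by rw [hh, ht, pow_succ]; ring⟩

theorem qPoch_dvd_f (f : ℕ → Polynomial ℤ)
    (H1 : ∀ n, (X - 1 : Polynomial ℤ) ^ n ∣ f n)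
    (H2 : ∀ {n m : ℕ}, n ≤ m → qPoch n ∣ f m - f n) :
    ∀ n, qPoch n ∣ f n := by
  intro n
  -- choose a large N
  have key := key_induction f H1 @H2
  set S : Finset ℕ := Finset.Icc 1 n with hS
  have hpos : ∀ d ∈ S, 0 < d := fun d hd => (Finset.mem_Icc.mp hd).1
  classical
  set g : ℕ → ℕ := fun d => if h : 0 < d then (key d h n).choose else 0 with hg
  set N : ℕ := max n (S.sup g) with hNdef
  have hdvd : ∀ d ∈ S, (cyclotomic d ℤ) ^ n ∣ f N := by
    intro d hd
    have hd0 := hpos d hd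
    have hspec := (key d hd0 n).choose_spec
    apply hspec
    calc (key d hd0 n).choose = g d := by rw [hg]; simp [hd0]
      _ ≤ S.sup g := Finset.le_sup hd
      _ ≤ N := le_max_right _ _
  have hprod : (∏ d ∈ S, (cyclotomic d ℤ) ^ n) ∣ f N := prod_cyc_pow_dvd S n (f N) hpos hdvd
  have hqp : qPoch n ∣ ∏ d ∈ S, (cyclotomic d ℤ) ^ n := by
    have h1 : qPoch n ∣ ∏ _i ∈ Finset.range n, (∏ d ∈ S, cyclotomic d ℤ) := by
      rw [qPoch]
      refine Finset.prod_dvd_prod_of_dvd _ _ fun i hi => ?_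
      have hpos' : 0 < i + 1 := Nat.succ_pos i
      rw [← prod_cyclotomic_eq_X_pow_sub_one hpos' ℤ]
      refine Finset.prod_dvd_prod_of_subset _ _ _ fun d hd => ?_
      rw [Finset.mem_Icc]
      have hd1 := Nat.pos_of_mem_divisors hd
      have hd2 := Nat.le_of_dvd hpos' (Nat.mem_divisors.mp hd).1
      have hi' := Finset.mem_range.mp hi
      omega
    rwa [Finset.prod_const, ← Finset.prod_pow, Finset.card_range] at h1
  have hfin : qPoch n ∣ f N := hqp.trans hprod
  have hdiff : qPoch n ∣ f N - f n := H2 (le_trans (le_refl n) (le_max_left _ _))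
  have : f n = f N - (f N - f n) := by ring
  rw [this]
  exact dvd_sub hfin hdiff


lemma evalOnePlusT_eq_coe (f : Polynomial ℤ) :
    evalOnePlusT f = ((f.comp (1 + X) : Polynomial ℤ) : PowerSeries ℤ) := by
  have h : evalOnePlusT = (Polynomial.coeToPowerSeries.ringHom (R := ℤ)).comp
      (Polynomial.eval₂RingHom Polynomial.C (1 + X : Polynomial ℤ)) := by
    apply Polynomial.ringHom_ext
    · intro a
      simp [evalOnePlusT, eq_intCast]
    · simp [evalOnePlusT, Polynomial.coe_add, Polynomial.coe_one, Polynomial.coe_X]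
  rw [h]
  rfl

lemma evalOnePlusT_X_sub_one : evalOnePlusT (X - 1) = PowerSeries.X := by
  simp [evalOnePlusT]

lemma X_pow_dvd_eval_qPoch (n : ℕ) :
    (PowerSeries.X : PowerSeries ℤ) ^ n ∣ evalOnePlusT (qPoch n) := by
  have h := map_dvd evalOnePlusT (X_sub_one_pow_dvd_qPoch n)
  rwa [map_pow, evalOnePlusT_X_sub_one] at h

lemma X_sub_one_pow_dvd_of_eval {f : Polynomial ℤ} {n : ℕ}
    (h : (PowerSeries.X : PowerSeries ℤ) ^ n ∣ evalOnePlusT f) :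
    (X - 1 : Polynomial ℤ) ^ n ∣ f := by
  rw [evalOnePlusT_eq_coe] at h
  set g := f.comp (1 + X) with hg
  have hdvd : (X : Polynomial ℤ) ^ n ∣ g := by
    rw [Polynomial.X_pow_dvd_iff]
    intro d hd
    have := PowerSeries.X_pow_dvd_iff.mp h d hd
    rwa [Polynomial.coeff_coe] at this
  obtain ⟨t, ht⟩ := hdvd
  have hfg : f = g.comp (X - 1) := by
    rw [hg, Polynomial.comp_assoc]
    have : (1 + X : Polynomial ℤ).comp (X - 1) = X := by
      simp [Polynomial.add_comp]
    rw [this, Polynomial.comp_X]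
  rw [hfg, ht, Polynomial.mul_comp, Polynomial.pow_comp, Polynomial.X_comp]
  exact Dvd.intro _ rfl

lemma habiro_compat (x : HabiroRing) (n : ℕ) :
    habiroTrans n (x.1 (n + 1)) = x.1 n := x.2 n

lemma habiroTrans_mk (n : ℕ) (f : Polynomial ℤ) :
    habiroTrans n (Ideal.Quotient.mk (Ideal.span {qPoch (n + 1)}) f)
      = Ideal.Quotient.mk (Ideal.span {qPoch n}) f :=
  Ideal.Quotient.factor_mk _ _

lemma mk_chain (x : HabiroRing) :
    ∀ (k n : ℕ) (f : Polynomial ℤ),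
      Ideal.Quotient.mk (Ideal.span {qPoch (n + k)}) f = x.1 (n + k) →
      Ideal.Quotient.mk (Ideal.span {qPoch n}) f = x.1 n := by
  intro k
  induction k with
  | zero => intro n f hf; exact hf
  | succ k ih =>
    intro n f hf
    apply ih
    have h1 : habiroTrans (n + k) (x.1 (n + k + 1)) = x.1 (n + k) := habiro_compat x (n + k)
    have h2 : Ideal.Quotient.mk (Ideal.span {qPoch (n + k + 1)}) f = x.1 (n + k + 1) := hf
    rw [← h1, ← h2, habiroTrans_mk]

lemma mk_eq_of_le (x : HabiroRing) {n m : ℕ} (h : n ≤ m) (f : Polynomial ℤ)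
    (hf : Ideal.Quotient.mk (Ideal.span {qPoch m}) f = x.1 m) :
    Ideal.Quotient.mk (Ideal.span {qPoch n}) f = x.1 n := by
  obtain ⟨k, rfl⟩ := Nat.exists_eq_add_of_le h
  exact mk_chain x k n f hf

/-- a chosen representative of `x n`. -/
noncomputable def hrep (x : HabiroRing) (n : ℕ) : Polynomial ℤ :=
  (Ideal.Quotient.mk_surjective (I := Ideal.span {qPoch n}) (x.1 n)).choose

lemma hrep_spec (x : HabiroRing) (n : ℕ) :
    Ideal.Quotient.mk (Ideal.span {qPoch n}) (hrep x n) = x.1 n :=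
  (Ideal.Quotient.mk_surjective (x.1 n)).choose_spec

lemma coeff_eval_eq_of_qPoch_dvd {g h : Polynomial ℤ} {n j : ℕ} (hj : j < n)
    (hd : qPoch n ∣ g - h) :
    PowerSeries.coeff j (evalOnePlusT g) = PowerSeries.coeff j (evalOnePlusT h) := by
  have h1 : (PowerSeries.X : PowerSeries ℤ) ^ n ∣ evalOnePlusT g - evalOnePlusT h := by
    rw [← map_sub]
    exact (X_pow_dvd_eval_qPoch n).trans (map_dvd evalOnePlusT hd)
  have h2 := PowerSeries.X_pow_dvd_iff.mp h1 j hj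
  rw [map_sub] at h2
  exact sub_eq_zero.mp h2

noncomputable def iota1Fun (x : HabiroRing) : PowerSeries ℤ :=
  PowerSeries.mk fun n => PowerSeries.coeff n (evalOnePlusT (hrep x (n + 1)))

lemma coeff_iota1 (x : HabiroRing) {n j : ℕ} (hj : j < n) (f : Polynomial ℤ)
    (hf : Ideal.Quotient.mk (Ideal.span {qPoch n}) f = x.1 n) :
    PowerSeries.coeff j (iota1Fun x) = PowerSeries.coeff j (evalOnePlusT f) := by
  have h0 : PowerSeries.coeff j (iota1Fun x)
      = PowerSeries.coeff j (evalOnePlusT (hrep x (j + 1))) := by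
    simp [iota1Fun]
  rw [h0]
  apply coeff_eval_eq_of_qPoch_dvd (Nat.lt_succ_self j)
  have e1 : Ideal.Quotient.mk (Ideal.span {qPoch (j+1)}) (hrep x (j+1)) = x.1 (j+1) :=
    hrep_spec x (j+1)
  have e2 : Ideal.Quotient.mk (Ideal.span {qPoch (j+1)}) f = x.1 (j+1) :=
    mk_eq_of_le x hj f hf
  have : Ideal.Quotient.mk (Ideal.span {qPoch (j+1)}) (hrep x (j+1) - f) = 0 := by
    rw [map_sub, e1, e2, sub_self]
  rw [Ideal.Quotient.eq_zero_iff_mem, Ideal.mem_span_singleton] at this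
  exact this

lemma iota1_sub_dvd (x : HabiroRing) (n : ℕ) (f : Polynomial ℤ)
    (hf : Ideal.Quotient.mk (Ideal.span {qPoch n}) f = x.1 n) :
    (PowerSeries.X : PowerSeries ℤ) ^ n ∣ iota1Fun x - evalOnePlusT f := by
  rw [PowerSeries.X_pow_dvd_iff]
  intro d hd
  rw [map_sub, coeff_iota1 x hd f hf, sub_self]

lemma coeff_eq_of_sub_dvd {a b : PowerSeries ℤ} {n j : ℕ}
    (h : (PowerSeries.X : PowerSeries ℤ) ^ n ∣ a - b) (hj : j < n) :
    PowerSeries.coeff j a = PowerSeries.coeff j b := by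
  have := PowerSeries.X_pow_dvd_iff.mp h j hj
  rw [map_sub] at this
  exact sub_eq_zero.mp this

lemma coe_one_apply (n : ℕ) :
    (1 : HabiroRing).1 n = (1 : Polynomial ℤ ⧸ Ideal.span {qPoch n}) := by
  have h := OneMemClass.coe_one HabiroRing
  exact (congrFun h n).trans (Pi.one_apply n)

lemma coe_zero_apply (n : ℕ) :
    (0 : HabiroRing).1 n = (0 : Polynomial ℤ ⧸ Ideal.span {qPoch n}) := by
  have h := ZeroMemClass.coe_zero HabiroRing
  exact (congrFun h n).trans (Pi.zero_apply n)

lemma coe_apply_mul (x y : HabiroRing) (n : ℕ) : (x * y).1 n = x.1 n * y.1 n := by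
  have h := HabiroRing.coe_mul x y
  exact (congrFun h n).trans (Pi.mul_apply _ _ n)

lemma coe_apply_add (x y : HabiroRing) (n : ℕ) : (x + y).1 n = x.1 n + y.1 n := by
  have h := HabiroRing.coe_add x y
  exact (congrFun h n).trans (Pi.add_apply _ _ n)

lemma mk_one_habiro (n : ℕ) :
    Ideal.Quotient.mk (Ideal.span {qPoch n}) 1 = (1 : HabiroRing).1 n := by
  rw [map_one, coe_one_apply]

lemma mk_zero_habiro (n : ℕ) :
    Ideal.Quotient.mk (Ideal.span {qPoch n}) 0 = (0 : HabiroRing).1 n := by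
  rw [map_zero, coe_zero_apply]

noncomputable def iota1 : HabiroRing →+* PowerSeries ℤ where
  toFun := iota1Fun
  map_one' := by
    apply PowerSeries.ext
    intro j
    rw [coeff_iota1 1 (Nat.lt_succ_self j) 1 (mk_one_habiro (j+1)), map_one]
  map_mul' := by
    intro x y
    show iota1Fun (x * y) = iota1Fun x * iota1Fun y
    apply PowerSeries.ext
    intro j
    set fx := hrep x (j+1)
    set fy := hrep y (j+1)
    have hmk : Ideal.Quotient.mk (Ideal.span {qPoch (j+1)}) (fx * fy) = (x * y).1 (j+1) := by
      rw [map_mul, hrep_spec, hrep_spec, coe_apply_mul]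
    rw [coeff_iota1 (x*y) (Nat.lt_succ_self j) (fx*fy) hmk]
    have hx := iota1_sub_dvd x (j+1) fx (hrep_spec x (j+1))
    have hy := iota1_sub_dvd y (j+1) fy (hrep_spec y (j+1))
    have hprod : (PowerSeries.X : PowerSeries ℤ) ^ (j+1) ∣
        iota1Fun x * iota1Fun y - evalOnePlusT (fx * fy) := by
      have heq : iota1Fun x * iota1Fun y - evalOnePlusT (fx * fy)
          = iota1Fun x * (iota1Fun y - evalOnePlusT fy)
            + (iota1Fun x - evalOnePlusT fx) * evalOnePlusT fy := by
        rw [map_mul]; ring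
      rw [heq]
      exact dvd_add (Dvd.dvd.mul_left hy _) (Dvd.dvd.mul_right hx _)
    exact (coeff_eq_of_sub_dvd hprod (Nat.lt_succ_self j)).symm
  map_zero' := by
    apply PowerSeries.ext
    intro j
    rw [coeff_iota1 0 (Nat.lt_succ_self j) 0 (mk_zero_habiro (j+1)), map_zero, map_zero]
  map_add' := by
    intro x y
    show iota1Fun (x + y) = iota1Fun x + iota1Fun y
    apply PowerSeries.ext
    intro j
    set fx := hrep x (j+1)
    set fy := hrep y (j+1)
    have hmk : Ideal.Quotient.mk (Ideal.span {qPoch (j+1)}) (fx + fy) = (x + y).1 (j+1) := by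
      rw [map_add, hrep_spec, hrep_spec, coe_apply_add]
    rw [coeff_iota1 (x+y) (Nat.lt_succ_self j) (fx+fy) hmk, map_add, map_add, map_add,
      coeff_iota1 x (Nat.lt_succ_self j) fx (hrep_spec x (j+1)),
      coeff_iota1 y (Nat.lt_succ_self j) fy (hrep_spec y (j+1))]

lemma iota1Fun_injective (x : HabiroRing) (hx : iota1Fun x = 0) : x = 0 := by
  have H1 : ∀ n, (X - 1 : Polynomial ℤ) ^ n ∣ hrep x n := by
    intro n
    apply X_sub_one_pow_dvd_of_eval
    have h := iota1_sub_dvd x n (hrep x n) (hrep_spec x n)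
    rw [hx, zero_sub] at h
    exact (dvd_neg).mp h
  have H2 : ∀ {n m : ℕ}, n ≤ m → qPoch n ∣ hrep x m - hrep x n := by
    intro n m hnm
    have e1 : Ideal.Quotient.mk (Ideal.span {qPoch n}) (hrep x m) = x.1 n :=
      mk_eq_of_le x hnm _ (hrep_spec x m)
    have h : Ideal.Quotient.mk (Ideal.span {qPoch n}) (hrep x m - hrep x n) = 0 := by
      rw [map_sub, e1, hrep_spec, sub_self]
    rw [Ideal.Quotient.eq_zero_iff_mem, Ideal.mem_span_singleton] at h
    exact h
  have hdvd := qPoch_dvd_f (hrep x) H1 @H2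
  apply Subtype.ext
  funext n
  have h1 : x.1 n = Ideal.Quotient.mk (Ideal.span {qPoch n}) (hrep x n) := (hrep_spec x n).symm
  have h2 : Ideal.Quotient.mk (Ideal.span {qPoch n}) (hrep x n) = 0 := by
    rw [Ideal.Quotient.eq_zero_iff_mem, Ideal.mem_span_singleton]
    exact hdvd n
  show x.1 n = (0 : HabiroRing).1 n
  rw [h1, h2, coe_zero_apply]

lemma habiroPi_apply (n : ℕ) (x : HabiroRing) : habiroPi n x = x.1 n := rfl

theorem habiro_iota_one_injective' :
    (∀ n : ℕ, evalOnePlusT (qPoch n) ∈ Ideal.span {(PowerSeries.X : PowerSeries ℤ) ^ n}) ∧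
    ∃ ι₁ : HabiroRing →+* PowerSeries ℤ,
      (∀ (n : ℕ) (x : HabiroRing) (f : Polynomial ℤ),
        habiroPi n x = Ideal.Quotient.mk (Ideal.span {qPoch n}) f →
        ι₁ x - evalOnePlusT f ∈ Ideal.span {(PowerSeries.X : PowerSeries ℤ) ^ n}) ∧
      Function.Injective ι₁ ∧
      (∀ ι' : HabiroRing →+* PowerSeries ℤ,
        (∀ (n : ℕ) (x : HabiroRing) (f : Polynomial ℤ),
          habiroPi n x = Ideal.Quotient.mk (Ideal.span {qPoch n}) f →
          ι' x - evalOnePlusT f ∈ Ideal.span {(PowerSeries.X : PowerSeries ℤ) ^ n}) →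
        ι' = ι₁) := by
  refine ⟨fun n => Ideal.mem_span_singleton.mpr (X_pow_dvd_eval_qPoch n), iota1, ?_, ?_, ?_⟩
  · intro n x f hf
    rw [Ideal.mem_span_singleton]
    exact iota1_sub_dvd x n f ((habiroPi_apply n x) ▸ hf).symm
  · intro a b hab
    have h0 : iota1 (a - b) = 0 := by rw [RingHom.map_sub, hab, sub_self]
    have h1 : a - b = 0 := iota1Fun_injective (a - b) h0
    exact sub_eq_zero.mp h1
  · intro ι' hι'
    apply RingHom.ext
    intro x
    apply PowerSeries.ext
    intro j
    have c1 : (PowerSeries.X : PowerSeries ℤ) ^ (j+1) ∣ ι' x - evalOnePlusT (hrep x (j+1)) := by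
      rw [← Ideal.mem_span_singleton]
      exact hι' (j+1) x (hrep x (j+1)) (by rw [habiroPi_apply]; exact (hrep_spec x (j+1)).symm)
    have c2 := iota1_sub_dvd x (j+1) (hrep x (j+1)) (hrep_spec x (j+1))
    have c3 : (PowerSeries.X : PowerSeries ℤ) ^ (j+1) ∣ ι' x - iota1 x := by
      have heq : ι' x - iota1 x = (ι' x - evalOnePlusT (hrep x (j+1)))
          - (iota1Fun x - evalOnePlusT (hrep x (j+1))) := by
        show _ = _ - (iota1 x - _)
        ring
      rw [heq]
      exact dvd_sub c1 c2
    exact coeff_eq_of_sub_dvd c3 (Nat.lt_succ_self j)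

/-- The homomorphism `ℤ[q] → ℤ[[t]]`, `q ↦ 1 + t`, maps `(q;q)_n` into
`(t^n)` for every `n`; hence it induces a ring homomorphism `ι₁ : Ẑ[q]^ → ℤ[[t]]`,
characterized by compatibility with the projections `π_n` modulo `t^n`; and `ι₁` is
injective. -/
theorem habiro_iota_one_injective :
    (∀ n : ℕ, evalOnePlusT (qPoch n) ∈ Ideal.span {(PowerSeries.X : PowerSeries ℤ) ^ n}) ∧
    ∃ ι₁ : HabiroRing →+* PowerSeries ℤ,
      (∀ (n : ℕ) (x : HabiroRing) (f : Polynomial ℤ),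
        habiroPi n x = Ideal.Quotient.mk (Ideal.span {qPoch n}) f →
        ι₁ x - evalOnePlusT f ∈ Ideal.span {(PowerSeries.X : PowerSeries ℤ) ^ n}) ∧
      Function.Injective ι₁ ∧
      (∀ ι' : HabiroRing →+* PowerSeries ℤ,
        (∀ (n : ℕ) (x : HabiroRing) (f : Polynomial ℤ),
          habiroPi n x = Ideal.Quotient.mk (Ideal.span {qPoch n}) f →
          ι' x - evalOnePlusT f ∈ Ideal.span {(PowerSeries.X : PowerSeries ℤ) ^ n}) →
        ι' = ι₁) := by
  exact habiro_iota_one_injective'
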